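/- The Gibbs risk decomposes as half the expected disagreement plus the expected joint error: R_D(G_Q) = (1/2) d_D(Q) + e_D(Q). -/

import Mathlib

/-- The Gibbs risk decomposes as half the expected disagreement plus the
expected joint error: `R_D(G_Q) = (1/2) d_D(Q) + e_D(Q)`. Labels are `Bool`,
with `true ↦ 1` and `false ↦ -1`. -/
theorem gibbs_risk_eq_half_disagreement_add_joint_error
    {X H : Type*} [Fintype X] [Fintype H]
    (v : H → X → ℝ) (hv : ∀ h x, v h x = 1 ∨ v h x = -1)
    (Q : H → ℝ) (hQ0 : ∀ h, 0 ≤ Q h) (hQ1 : ∑ h, Q h = 1)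
    (D : X × Bool → ℝ) (hD0 : ∀ z, 0 ≤ D z) (hD1 : ∑ z, D z = 1) :
    -- R_D(G_Q)
    (∑ z : X × Bool, D z *
        ∑ h, Q h * (if v h z.1 = (if z.2 then (1 : ℝ) else -1) then 0 else 1))
    =
    -- (1/2) d_D(Q)
    (1 / 2) * (∑ z : X × Bool, D z *
        ∑ h, ∑ h', Q h * Q h' * (if v h z.1 = v h' z.1 then 0 else 1))
    +
    -- e_D(Q)
    (∑ z : X × Bool, D z *
        ∑ h, ∑ h', Q h * Q h' *
          ((if v h z.1 = (if z.2 then (1 : ℝ) else -1) then 0 else 1) *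
           (if v h' z.1 = (if z.2 then (1 : ℝ) else -1) then 0 else 1))) := by
  have key : ∀ (x : X) (y : ℝ), (y = 1 ∨ y = -1) →
      (∑ h, Q h * (if v h x = y then (0:ℝ) else 1))
      = 1 / 2 * (∑ h, ∑ h', Q h * Q h' * (if v h x = v h' x then 0 else 1))
        + ∑ h, ∑ h', Q h * Q h' *
            ((if v h x = y then 0 else 1) * (if v h' x = y then 0 else 1)) := by
    intro x y hy
    set r : H → ℝ := fun h => if v h x = y then 0 else 1 with hr
    have hpt : ∀ h h', (if v h x = v h' x then (0:ℝ) else 1)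
        = r h + r h' - 2 * (r h * r h') := by
      intro h h'
      simp only [hr]
      rcases hv h x with a | a <;> rcases hv h' x with b | b <;>
        rcases hy with c | c <;> simp [a, b, c] <;> norm_num
    set S : ℝ := ∑ h, Q h * r h with hS
    have A : ∑ h, ∑ h', Q h * Q h' * r h = S := by
      refine Finset.sum_congr rfl fun h _ => ?_
      have : ∀ h', Q h * Q h' * r h = Q h' * (Q h * r h) := fun _ => by ring
      simp_rw [this, ← Finset.sum_mul, hQ1, one_mul]
    have B : ∑ h, ∑ h', Q h * Q h' * r h' = S := by
      have : ∀ h h', Q h * Q h' * r h' = Q h * (Q h' * r h') := fun _ _ => by ring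
      simp_rw [this, ← Finset.mul_sum, ← Finset.sum_mul, hQ1, one_mul]
      rw [hS]
    have C : ∑ h, ∑ h', Q h * Q h' * (2 * (r h * r h')) = 2 * (S * S) := by
      have : ∀ h h', Q h * Q h' * (2 * (r h * r h'))
          = 2 * ((Q h * r h) * (Q h' * r h')) := fun _ _ => by ring
      simp_rw [this, ← Finset.mul_sum, ← Finset.sum_mul]
      rw [hS]
    have C' : ∑ h, ∑ h', Q h * Q h' * (r h * r h') = S * S := by
      have : ∀ h h', Q h * Q h' * (r h * r h')
          = (Q h * r h) * (Q h' * r h') := fun _ _ => by ring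
      simp_rw [this, ← Finset.mul_sum, ← Finset.sum_mul]
      rw [hS]
    simp only [hpt, mul_sub, mul_add, Finset.sum_sub_distrib, Finset.sum_add_distrib]
    rw [A, B, C, C']
    ring
  have hz : ∀ z : X × Bool,
      D z * ∑ h, Q h * (if v h z.1 = (if z.2 then (1 : ℝ) else -1) then 0 else 1)
      = 1 / 2 * (D z * ∑ h, ∑ h', Q h * Q h' * (if v h z.1 = v h' z.1 then 0 else 1))
        + D z * ∑ h, ∑ h', Q h * Q h' *
            ((if v h z.1 = (if z.2 then (1 : ℝ) else -1) then 0 else 1) *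
             (if v h' z.1 = (if z.2 then (1 : ℝ) else -1) then 0 else 1)) := by
    intro z
    rw [key z.1 (if z.2 then 1 else -1) (by cases z.2 <;> simp)]
    ring
  simp_rw [hz, Finset.sum_add_distrib, ← Finset.mul_sum]
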